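/- For 0 < r < s < 1, the point p = ((r+s) + i√((1−r²)(1−s²)))/(1+rs) on the unit circle satisfies: the segment from −i to p bisects the angle ∠(r, p, s), i.e., the angle between the vectors r − p and (−i) − p equals the angle between the vectors s − p and (−i) − p. -/

import Mathlib

set_option maxHeartbeats 1000000

open Complex EuclideanGeometry

theorem angle_bisection_radial (r s : ℝ) (h0r : 0 < r) (hrs : r < s) (hs1 : s < 1) :
    let p : ℂ := (((r + s : ℝ) : ℂ) + Complex.I * ((Real.sqrt ((1 - r ^ 2) * (1 - s ^ 2)) : ℝ) : ℂ)) /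
      ((1 + r * s : ℝ) : ℂ)
    EuclideanGeometry.angle (r : ℂ) p (-Complex.I) = EuclideanGeometry.angle (s : ℂ) p (-Complex.I) := by
  intro p
  have h0s : 0 < s := h0r.trans hrs
  have hr1 : r < 1 := hrs.trans hs1
  have hrs1 : r * s < 1 := by nlinarith
  have hd : (0:ℝ) < 1 + r * s := by nlinarith
  have hdne : (1 + r * s : ℝ) ≠ 0 := ne_of_gt hd
  set a : ℝ := Real.sqrt (1 - r ^ 2) with ha
  set b : ℝ := Real.sqrt (1 - s ^ 2) with hb
  have ha2 : a ^ 2 = 1 - r ^ 2 := Real.sq_sqrt (by nlinarith)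
  have hb2 : b ^ 2 = 1 - s ^ 2 := Real.sq_sqrt (by nlinarith)
  have hapos : 0 < a := Real.sqrt_pos.mpr (by nlinarith)
  have hbpos : 0 < b := Real.sqrt_pos.mpr (by nlinarith)
  have hq : Real.sqrt ((1 - r ^ 2) * (1 - s ^ 2)) = a * b := Real.sqrt_mul (by nlinarith) _
  set t : ℝ := Real.sqrt ((1 - r * s) / (1 + r * s)) with ht
  have ht2 : t ^ 2 = (1 - r * s) / (1 + r * s) :=
    Real.sq_sqrt (le_of_lt (div_pos (by linarith) hd))
  have htpos : 0 < t := Real.sqrt_pos.mpr (div_pos (by linarith) hd)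
  -- explicit form of p
  have hp : p = (((r + s)/(1 + r * s) : ℝ) : ℂ) + (((a * b)/(1 + r * s) : ℝ) : ℂ) * Complex.I := by
    simp only [p, hq]
    push_cast
    field_simp
  have hpre : p.re = (r + s) / (1 + r * s) := by
    rw [hp]
    simp only [Complex.add_re, Complex.ofReal_re, Complex.ofReal_im, Complex.mul_re,
      Complex.mul_im, Complex.I_re, Complex.I_im, mul_zero, mul_one, zero_sub, sub_zero]
    ring
  have hpim : p.im = (a * b) / (1 + r * s) := by
    rw [hp]
    simp only [Complex.add_im, Complex.ofReal_re, Complex.ofReal_im, Complex.mul_re,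
      Complex.mul_im, Complex.I_re, Complex.I_im, mul_zero, mul_one, zero_add, zero_mul, add_zero]
  set u : ℂ := (r : ℂ) - p with hu
  set v : ℂ := (s : ℂ) - p with hv
  set w : ℂ := -Complex.I - p with hw
  have hure : u.re = r - (r + s) / (1 + r * s) := by simp [hu, hpre]
  have huim : u.im = -((a * b) / (1 + r * s)) := by simp [hu, hpim]
  have hvre : v.re = s - (r + s) / (1 + r * s) := by simp [hv, hpre]
  have hvim : v.im = -((a * b) / (1 + r * s)) := by simp [hv, hpim]
  have hwre : w.re = -((r + s) / (1 + r * s)) := by simp [hw, hpre]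
  have hwim : w.im = -1 - (a * b) / (1 + r * s) := by simp [hw, hpim]
  -- inner products
  have hiu : (inner ℝ u w : ℝ) = (a ^ 2 + a * b) / (1 + r * s) := by
    rw [Complex.inner]
    simp only [Complex.mul_re, Complex.conj_re, Complex.conj_im]
    rw [hure, huim, hwre, hwim]
    have hab2 : (a*b)^2 = (1-r^2)*(1-s^2) := by rw [mul_pow, ha2, hb2]
    field_simp
    nlinarith [ha2, hb2, hab2]
  have hiv : (inner ℝ v w : ℝ) = (b ^ 2 + a * b) / (1 + r * s) := by
    rw [Complex.inner]
    simp only [Complex.mul_re, Complex.conj_re, Complex.conj_im]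
    rw [hvre, hvim, hwre, hwim]
    have hab2 : (a*b)^2 = (1-r^2)*(1-s^2) := by rw [mul_pow, ha2, hb2]
    field_simp
    nlinarith [ha2, hb2, hab2]
  -- norms
  have hnu : ‖u‖ = a * t := by
    rw [Complex.norm_def]
    have : Complex.normSq u = (a * t) ^ 2 := by
      rw [Complex.normSq_apply, hure, huim]
      rw [mul_pow, ht2]
      have hab2 : (a*b)^2 = (1-r^2)*(1-s^2) := by rw [mul_pow, ha2, hb2]
      field_simp
      linear_combination (1+r*s) * hab2 - (1-r*s)*(1+r*s)^2 * ha2 - r*s*a^2 * hb2 + r*s^3*(1-r^2) * ha2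
    rw [this, Real.sqrt_sq (by positivity)]
  have hnv : ‖v‖ = b * t := by
    rw [Complex.norm_def]
    have : Complex.normSq v = (b * t) ^ 2 := by
      rw [Complex.normSq_apply, hvre, hvim]
      rw [mul_pow, ht2]
      have hab2 : (a*b)^2 = (1-r^2)*(1-s^2) := by rw [mul_pow, ha2, hb2]
      field_simp
      linear_combination (1+r*s) * hab2 - (1-r*s)*(1+r*s)^2 * hb2 - s*r*b^2 * ha2 + s*r^3*(1-s^2) * hb2
    rw [this, Real.sqrt_sq (by positivity)]
  have hwne : w ≠ 0 := by
    intro h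
    have := congrArg Complex.im h
    rw [hwim] at this
    simp at this
    have hab : 0 < a * b / (1 + r * s) := by positivity
    linarith
  have hwn : (0:ℝ) < ‖w‖ := norm_pos_iff.mpr hwne
  -- reduce to equality of cosines
  show InnerProductGeometry.angle u w = InnerProductGeometry.angle v w
  unfold InnerProductGeometry.angle
  congr 1
  rw [hiu, hiv, hnu, hnv]
  rw [div_eq_div_iff (by positivity) (by positivity)]
  field_simp
  ring
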